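/- Let 0 ≤ η < 1/2, G(z) = (1/4)z⁴ + 2ηz³ + 4η²z² − z², v ∈ (0, v₀) with v₀ = √(−G(√(η²+2)−3η)), and y(v) the smallest positive root of G(z)+v² = 0. Then v² + 4η·y(v) − 1 = −((1/2)y(v)² + 2η·y(v) − 1)² < 0. -/
import Mathlib


theorem v_sq_identity (η : ℝ) (hη0 : 0 ≤ η) (hη : η < 1/2)
    (G : ℝ → ℝ) (hG : ∀ z, G z = (1/4) * z^4 + 2*η*z^3 + 4*η^2*z^2 - z^2)
    (v₀ : ℝ) (hv₀ : v₀ = Real.sqrt (-(G (Real.sqrt (η^2 + 2) - 3*η))))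
    (v : ℝ) (hv : v ∈ Set.Ioo 0 v₀)
    (yv : ℝ) (hyv : IsLeast {z : ℝ | 0 < z ∧ G z + v^2 = 0} yv) :
    v^2 + 4*η*yv - 1 = -((1/2)*yv^2 + 2*η*yv - 1)^2 ∧ v^2 + 4*η*yv - 1 < 0 := by
  obtain ⟨hv0, hvv0⟩ := hv
  set r := Real.sqrt (η^2 + 2) with hr
  have hr0 : 0 ≤ r := Real.sqrt_nonneg _
  have hr2 : r^2 = η^2 + 2 := Real.sq_sqrt (by positivity)
  set z₀ : ℝ := r - 3*η with hz₀
  have hz₀pos : 0 < z₀ := by nlinarith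
  have hv₀pos : 0 < v₀ := lt_trans hv0 hvv0
  have hGz₀neg : 0 < -(G z₀) := by
    rw [hv₀] at hv₀pos
    exact Real.sqrt_pos.mp hv₀pos
  have hv₀sq : v₀^2 = -(G z₀) := by
    rw [hv₀]; exact Real.sq_sqrt (le_of_lt hGz₀neg)
  have hvsq : v^2 < -(G z₀) := by
    rw [← hv₀sq]
    exact pow_lt_pow_left₀ hvv0 (le_of_lt hv0) (by norm_num)
  -- the root yv is < z₀ by IVT and leastness
  have hgy : G yv + v^2 = 0 := hyv.1.2
  have hypos : 0 < yv := hyv.1.1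
  have hcont : ContinuousOn (fun z => G z + v^2) (Set.Icc 0 z₀) := by
    have : (fun z => G z + v^2)
        = fun z => (1/4) * z^4 + 2*η*z^3 + 4*η^2*z^2 - z^2 + v^2 := by
      funext z; rw [hG z]
    rw [this]
    fun_prop
  have hivt := intermediate_value_Ioo' (le_of_lt hz₀pos) hcont
  have h0mem : (0:ℝ) ∈ Set.Ioo ((fun z => G z + v^2) z₀) ((fun z => G z + v^2) 0) := by
    constructor
    · simpa using by linarith
    · simp only
      rw [hG 0]
      have : (0:ℝ) < v^2 := by positivity
      simpa using by linarith
  obtain ⟨c, hcmem, hc0⟩ := hivt h0mem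
  have hyc : yv ≤ c := hyv.2 ⟨hcmem.1, hc0⟩
  have hylt : yv < z₀ := lt_of_le_of_lt hyc hcmem.2
  -- s(z₀) ≤ 1 and s increasing ⇒ s(yv) < 1
  have hs1 : (1/2)*yv^2 + 2*η*yv < 1 := by nlinarith
  have hGyv : G yv = (1/4) * yv^4 + 2*η*yv^3 + 4*η^2*yv^2 - yv^2 := hG yv
  constructor
  · linear_combination hgy - hGyv
  · have hneg : (1/2)*yv^2 + 2*η*yv - 1 < 0 := by linarith
    have hsq : 0 < ((1/2)*yv^2 + 2*η*yv - 1) * ((1/2)*yv^2 + 2*η*yv - 1) :=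
      mul_pos_of_neg_of_neg hneg hneg
    nlinarith [hgy, hGyv]
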